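/- arXiv:1604.05403 — 2 statements merged into one kernel-verified Lean document; each statement's English description precedes it below -/
import Mathlib

section
/- Let φ : U → U' be a homeomorphism between finite-dimensional real inner product spaces intertwining bilinear forms Φ, Φ', with left kernels L, L' and K = {x | Φ(x,L) = 0}, K' = {x' | Φ'(x',L') = 0}. Let L⊥_K be the orthogonal complement of L inside K, and L'⊥_{K'} the orthogonal complement of L' inside K'. Define ψ : L⊥_K → L'⊥_{K'} as the composition of the inclusion L⊥_K → K, the restriction of φ (which maps K onto K'), and the orthogonal projection K' → L'⊥_{K'} along L'. Define ψ' : L'⊥_{K'} → L⊥_K analogously using φ^{-1}. Then ψ' ∘ ψ = id and ψ ∘ ψ' = id, so ψ is a homeomorphism. -/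
open Submodule

private lemma aux_inv {U U' : Type*}
    [NormedAddCommGroup U] [InnerProductSpace ℝ U] [FiniteDimensional ℝ U]
    [NormedAddCommGroup U'] [InnerProductSpace ℝ U'] [FiniteDimensional ℝ U']
    (Φ : U →ₗ[ℝ] U →ₗ[ℝ] ℝ) (Φ' : U' →ₗ[ℝ] U' →ₗ[ℝ] ℝ)
    (φ : U ≃ₜ U')
    (h : ∀ x y : U, Φ x y = Φ' (φ x) (φ y))
    (L : Submodule ℝ U) (hL : L = LinearMap.ker Φ)
    (K : Submodule ℝ U) (hK : K = LinearMap.ker (Φ.compl₂ L.subtype))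
    (L' : Submodule ℝ U') (hL' : L' = LinearMap.ker Φ')
    (K' : Submodule ℝ U') (hK' : K' = LinearMap.ker (Φ'.compl₂ L'.subtype))
    (ψ : ↥(Lᗮ ⊓ K) → ↥(L'ᗮ ⊓ K'))
    (hψ : ∀ x : ↥(Lᗮ ⊓ K), ψ x = (L'ᗮ ⊓ K').orthogonalProjectionOnto (φ (x : U)))
    (ψ' : ↥(L'ᗮ ⊓ K') → ↥(Lᗮ ⊓ K))
    (hψ' : ∀ x' : ↥(L'ᗮ ⊓ K'), ψ' x' = (Lᗮ ⊓ K).orthogonalProjectionOnto (φ.symm (x' : U'))) :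
    ∀ x, ψ' (ψ x) = x := by
  -- membership characterizations
  have memL : ∀ z : U, z ∈ L ↔ ∀ y, Φ z y = 0 := by
    intro z; rw [hL, LinearMap.mem_ker]
    constructor
    · intro hz y; rw [hz]; rfl
    · intro hz; ext y; exact hz y
  have memL' : ∀ z : U', z ∈ L' ↔ ∀ y, Φ' z y = 0 := by
    intro z; rw [hL', LinearMap.mem_ker]
    constructor
    · intro hz y; rw [hz]; rfl
    · intro hz; ext y; exact hz y
  have memK' : ∀ z : U', z ∈ K' ↔ ∀ l ∈ L', Φ' z l = 0 := by
    intro z; rw [hK', LinearMap.mem_ker]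
    constructor
    · intro hz l hl
      have := congrFun (congrArg (fun f => f.toFun) hz) ⟨l, hl⟩
      simpa using this
    · intro hz; ext ⟨l, hl⟩; exact hz l hl
  have memK : ∀ z : U, z ∈ K ↔ ∀ l ∈ L, Φ z l = 0 := by
    intro z; rw [hK, LinearMap.mem_ker]
    constructor
    · intro hz l hl
      have := congrFun (congrArg (fun f => f.toFun) hz) ⟨l, hl⟩
      simpa using this
    · intro hz; ext ⟨l, hl⟩; exact hz l hl
  -- L' ⊆ K'
  have hL'K' : L' ≤ K' := by
    intro z hz
    rw [memK']
    intro l _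
    exact (memL' z).1 hz l
  intro x
  have hxLp : (x : U) ∈ Lᗮ := (Submodule.mem_inf.mp x.2).1
  have hxK : (x : U) ∈ K := (Submodule.mem_inf.mp x.2).2
  -- φ x ∈ K'
  have hφL' : ∀ l : U, l ∈ L → φ l ∈ L' := by
    intro l hl
    rw [memL']
    intro y
    have : Φ' (φ l) (φ (φ.symm y)) = Φ l (φ.symm y) := (h l (φ.symm y)).symm
    rw [(memL l).1 hl (φ.symm y)] at this
    simpa using this
  have hφxK' : (φ (x : U)) ∈ K' := by
    rw [memK']
    intro l' hl'
    have hsl : (φ.symm l') ∈ L := by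
      rw [memL]
      intro y
      rw [h (φ.symm l') y]
      simp only [Homeomorph.apply_symm_apply]
      -- Φ' l' (φ y) = 0 ; need symmetry? no: l' ∈ L' means Φ' l' = 0
      exact (memL' l').1 hl' (φ y)
    have hx : Φ (x : U) (φ.symm l') = 0 := (memK _).1 hxK _ hsl
    have := h (x : U) (φ.symm l')
    rw [hx] at this
    simpa using this.symm
  -- decompose φ x = a + b', a ∈ L'ᗮ ⊓ K', b' ∈ L'
  set v := φ (x : U) with hv
  set b' : U' := (orthogonalProjection L' v : U') with hb'
  have hb'L' : b' ∈ L' := (orthogonalProjection L' v).2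
  have haLp : v - b' ∈ L'ᗮ := sub_starProjection_mem_orthogonal (K := L') v
  have haK' : v - b' ∈ K' := K'.sub_mem hφxK' (hL'K' hb'L')
  have hb'perp : b' ∈ (L'ᗮ ⊓ K')ᗮ := by
    rw [Submodule.mem_orthogonal]
    intro u hu
    have h0 : inner ℝ b' u = (0:ℝ) :=
      (Submodule.mem_orthogonal _ _).mp (Submodule.mem_inf.mp hu).1 b' hb'L'
    rw [real_inner_comm] at h0
    exact h0
  have hψx : ((ψ x : U')) = v - b' := by
    rw [hψ x]
    exact eq_starProjection_of_mem_orthogonal'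
      (Submodule.mem_inf.mpr ⟨haLp, haK'⟩) hb'perp (by abel)
  -- w := φ.symm (ψ x) ; w - x ∈ L
  set w : U := φ.symm (ψ x : U') with hw
  have hwl : w - (x : U) ∈ L := by
    rw [memL]
    intro y
    have h1 : Φ w y = Φ' (ψ x : U') (φ y) := by
      have := h w y
      rwa [show φ w = (ψ x : U') by simp [hw]] at this
    have h2 : Φ (x : U) y = Φ' v (φ y) := h _ y
    have hbz : Φ' b' (φ y) = 0 := (memL' b').1 hb'L' (φ y)
    simp only [map_sub, LinearMap.sub_apply, h1, h2, hψx]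
    simp [hbz]
  -- project back
  have hlperp : w - (x : U) ∈ (Lᗮ ⊓ K)ᗮ := by
    rw [Submodule.mem_orthogonal]
    intro u hu
    have h0 : inner ℝ (w - (x : U)) u = (0:ℝ) := by
      have hu1 : u ∈ Lᗮ := (Submodule.mem_inf.mp hu).1
      exact (Submodule.mem_orthogonal _ _).mp hu1 _ hwl
    rw [real_inner_comm] at h0
    exact h0
  have : ((ψ' (ψ x) : U)) = (x : U) := by
    rw [hψ' (ψ x)]
    exact eq_starProjection_of_mem_orthogonal' x.2 hlperp (by abel)
  exact Subtype.ext this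

/-- With `L, L'` the left kernels, `K = {x | Φ(x,L)=0}`,
`K' = {x' | Φ'(x',L')=0}`, and `ψ : L⊥∩K → L'⊥∩K'` given by applying `φ` and
then orthogonally projecting (and `ψ'` analogously from `φ⁻¹`), one has
`ψ' ∘ ψ = id`, `ψ ∘ ψ' = id`, and `ψ`, `ψ'` are continuous, so `ψ` is a
homeomorphism. -/
theorem stmt_4 {U U' : Type*}
    [NormedAddCommGroup U] [InnerProductSpace ℝ U] [FiniteDimensional ℝ U]
    [NormedAddCommGroup U'] [InnerProductSpace ℝ U'] [FiniteDimensional ℝ U']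
    (Φ : U →ₗ[ℝ] U →ₗ[ℝ] ℝ) (Φ' : U' →ₗ[ℝ] U' →ₗ[ℝ] ℝ)
    (φ : U ≃ₜ U')
    (h : ∀ x y : U, Φ x y = Φ' (φ x) (φ y))
    (L : Submodule ℝ U) (hL : L = LinearMap.ker Φ)
    (K : Submodule ℝ U) (hK : K = LinearMap.ker (Φ.compl₂ L.subtype))
    (L' : Submodule ℝ U') (hL' : L' = LinearMap.ker Φ')
    (K' : Submodule ℝ U') (hK' : K' = LinearMap.ker (Φ'.compl₂ L'.subtype))
    (ψ : ↥(Lᗮ ⊓ K) → ↥(L'ᗮ ⊓ K'))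
    (hψ : ∀ x : ↥(Lᗮ ⊓ K), ψ x = (L'ᗮ ⊓ K').orthogonalProjectionOnto (φ (x : U)))
    (ψ' : ↥(L'ᗮ ⊓ K') → ↥(Lᗮ ⊓ K))
    (hψ' : ∀ x' : ↥(L'ᗮ ⊓ K'), ψ' x' = (Lᗮ ⊓ K).orthogonalProjectionOnto (φ.symm (x' : U'))) :
    (∀ x, ψ' (ψ x) = x) ∧ (∀ x', ψ (ψ' x') = x') ∧ Continuous ψ ∧ Continuous ψ' := by
  have h' : ∀ x y : U', Φ' x y = Φ (φ.symm x) (φ.symm y) := by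
    intro x y
    have := h (φ.symm x) (φ.symm y)
    simpa using this.symm
  refine ⟨aux_inv Φ Φ' φ h L hL K hK L' hL' K' hK' ψ hψ ψ' hψ',
    aux_inv Φ' Φ φ.symm h' L' hL' K' hK' L hL K hK ψ' hψ' ψ (by simpa using hψ), ?_, ?_⟩
  · have : ψ = fun x : ↥(Lᗮ ⊓ K) => orthogonalProjection (L'ᗮ ⊓ K') (φ (x : U)) := funext hψ
    rw [this]
    exact (orthogonalProjection (L'ᗮ ⊓ K')).continuous.comp
      (φ.continuous.comp continuous_subtype_val)
  · have : ψ' = fun x' : ↥(L'ᗮ ⊓ K') => orthogonalProjection (Lᗮ ⊓ K) (φ.symm (x' : U')) := funext hψ'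
    rw [this]
    exact (orthogonalProjection (Lᗮ ⊓ K)).continuous.comp
      (φ.symm.continuous.comp continuous_subtype_val)
end

section
/- In the setting of the previous construction, for all x, y ∈ L⊥_K one has Φ(x,y) = Φ'(ψ(x), ψ(y)); that is, the restrictions of Φ to L⊥_K and of Φ' to L'⊥_{K'} are topologically equivalent via ψ. -/
/-- In the setting of the construction of `ψ` (composition of
inclusion `L⊥∩K → U`, the homeomorphism `φ`, and the orthogonal projection
onto `L'⊥∩K'`), the restriction of `Φ` to `L⊥∩K` and the restriction of `Φ'`
to `L'⊥∩K'` satisfy `Φ(x,y) = Φ'(ψ x, ψ y)` for all `x, y ∈ L⊥∩K`. -/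
theorem stmt_5 {U U' : Type*}
    [NormedAddCommGroup U] [InnerProductSpace ℝ U] [FiniteDimensional ℝ U]
    [NormedAddCommGroup U'] [InnerProductSpace ℝ U'] [FiniteDimensional ℝ U']
    (Φ : U →ₗ[ℝ] U →ₗ[ℝ] ℝ) (Φ' : U' →ₗ[ℝ] U' →ₗ[ℝ] ℝ)
    (φ : U ≃ₜ U')
    (h : ∀ x y : U, Φ x y = Φ' (φ x) (φ y))
    (L : Submodule ℝ U) (hL : L = LinearMap.ker Φ)
    (K : Submodule ℝ U) (hK : K = LinearMap.ker (Φ.compl₂ L.subtype))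
    (L' : Submodule ℝ U') (hL' : L' = LinearMap.ker Φ')
    (K' : Submodule ℝ U') (hK' : K' = LinearMap.ker (Φ'.compl₂ L'.subtype))
    (ψ : ↥(Lᗮ ⊓ K) → ↥(L'ᗮ ⊓ K'))
    (hψ : ∀ x : ↥(Lᗮ ⊓ K), ψ x = Submodule.orthogonalProjection (L'ᗮ ⊓ K') (φ (x : U))) :
    ∀ x y : ↥(Lᗮ ⊓ K), Φ (x : U) (y : U) = Φ' (ψ x : U') (ψ y : U') := by
  -- membership characterizations
  have hLmem : ∀ z : U, z ∈ L ↔ ∀ w, Φ z w = 0 := by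
    intro z; rw [hL, LinearMap.mem_ker, LinearMap.ext_iff]; simp
  have hL'mem : ∀ z : U', z ∈ L' ↔ ∀ w, Φ' z w = 0 := by
    intro z; rw [hL', LinearMap.mem_ker, LinearMap.ext_iff]; simp
  have hKmem : ∀ z : U, z ∈ K ↔ ∀ l ∈ L, Φ z l = 0 := by
    intro z; rw [hK, LinearMap.mem_ker, LinearMap.ext_iff]
    simp [LinearMap.compl₂_apply, Subtype.forall]
  have hK'mem : ∀ z : U', z ∈ K' ↔ ∀ l ∈ L', Φ' z l = 0 := by
    intro z; rw [hK', LinearMap.mem_ker, LinearMap.ext_iff]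
    simp [LinearMap.compl₂_apply, Subtype.forall]
  -- φ.symm maps L' into L
  have hφsymmL' : ∀ z ∈ L', φ.symm z ∈ L := by
    intro z hz
    rw [hLmem]
    intro w
    have := h (φ.symm z) w
    rw [φ.apply_symm_apply] at this
    rw [this, (hL'mem z).mp hz]
  -- L' ⊆ K'
  have hL'K' : ∀ z ∈ L', z ∈ K' := by
    intro z hz
    rw [hK'mem]
    intro l _
    exact (hL'mem z).mp hz l
  -- φ maps K into K'
  have hφK' : ∀ z ∈ K, φ z ∈ K' := by
    intro z hz
    rw [hK'mem]
    intro l' hl'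
    have h1 := h z (φ.symm l')
    rw [φ.apply_symm_apply] at h1
    rw [← h1]
    exact (hKmem z).mp hz _ (hφsymmL' l' hl')
  -- key: φ x - ψ x ∈ L'
  have hdiff : ∀ v : ↥(Lᗮ ⊓ K), φ (v : U) - (ψ v : U') ∈ L' := by
    intro v
    have hvK : (v : U) ∈ K := (Submodule.mem_inf.mp v.2).2
    set p : ↥L' := Submodule.orthogonalProjection L' (φ (v : U)) with hp
    have hb : φ (v : U) - (p : U') ∈ L'ᗮ ⊓ K' := by
      refine Submodule.mem_inf.mpr ⟨Submodule.sub_starProjection_mem_orthogonal (K := L') _, ?_⟩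
      exact Submodule.sub_mem _ (hφK' _ hvK) (hL'K' _ p.2)
    have hpperp : (p : U') ∈ (L'ᗮ ⊓ K')ᗮ := by
      have h1 : L'ᗮ ⊓ K' ≤ L'ᗮ := inf_le_left
      have h2 : (L'ᗮ)ᗮ ≤ (L'ᗮ ⊓ K')ᗮ := Submodule.orthogonal_le h1
      exact h2 (Submodule.le_orthogonal_orthogonal L' p.2)
    have hsplit : φ (v : U) = (p : U') + (φ (v : U) - (p : U')) := by abel
    have hproj : (ψ v : U') = φ (v : U) - (p : U') := by
      rw [hψ v]
      conv_lhs => rw [hsplit]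
      rw [map_add,
        Submodule.orthogonalProjectionOnto_apply_of_mem_orthogonal hpperp,
        zero_add, Submodule.orthogonalProjectionOnto_mem_subspace_eq_self ⟨_, hb⟩]
    rw [hproj]
    simp only [sub_sub_cancel]
    exact p.2
  intro x y
  have hx' : (ψ x : U') ∈ K' := (Submodule.mem_inf.mp (ψ x).2).2
  have hxd := hdiff x
  have hyd := hdiff y
  have ex : φ (x : U) = (ψ x : U') + (φ (x : U) - (ψ x : U')) := by abel
  have ey : φ (y : U) = (ψ y : U') + (φ (y : U) - (ψ y : U')) := by abel
  have hzx : ∀ w, Φ' (φ (x : U) - (ψ x : U')) w = 0 := (hL'mem _).mp hxd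
  have hzy : Φ' (ψ x : U') (φ (y : U) - (ψ y : U')) = 0 := (hK'mem _).mp hx' _ hyd
  rw [h, ex, ey]
  simp only [map_add, LinearMap.add_apply, hzx, hzy, add_zero, zero_add]
end
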